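/- Let h* be the unique minimizer of E_σ(h) := OT(hμ,σ) + (g/(2f²)) ∫_Ω h² dμ over probability densities on Ω, and for ε > 0 let h_ε be a minimizer over probability densities of E_{σ,ε}(h) := OT_ε(hμ,σ) + (g/(2f²)) ∫_Ω h² dμ. Then ‖h_ε − h*‖²_{L²(μ)} ≤ (2f²/g)·(OT_ε(h*μ, σ) − OT(h*μ, σ)). In particular, if OT_ε(h*μ,σ) − OT(h*μ,σ) ≤ C·ε·log(1/ε), then ‖h_ε − h*‖_{L²(μ)} ≤ √((2f²/g)·C·ε·log(1/ε)). -/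

import Mathlib

open MeasureTheory Classical

/-- The Kullback–Leibler divergence of `π` with respect to `η`: equal to
`∫ log(dπ/dη) dπ` when `π ≪ η` (and the log-likelihood ratio is `π`-integrable),
and `+∞` otherwise. -/
noncomputable def KLdiv {α : Type*} [MeasurableSpace α] (π η : Measure α) : ENNReal :=
  if π ≪ η ∧ Integrable (fun x => Real.log (π.rnDeriv η x).toReal) π then
    ENNReal.ofReal (∫ x, Real.log (π.rnDeriv η x).toReal ∂π)
  else ⊤

/-- The entropic optimal transport cost with quadratic cost `½‖x−y‖²` and regularisation
parameter `ε`: the infimum over couplings `π` of `ρ` and `ν` of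
`∫ ½‖x−y‖² dπ + ε·KL(π ‖ ρ⊗ν)`.  For `ε = 0` this is the usual quadratic optimal
transport cost `OT`. -/
noncomputable def OTeps (ε : ℝ)
    (ρ ν : Measure (EuclideanSpace ℝ (Fin 2))) : ENNReal :=
  ⨅ (π : Measure (EuclideanSpace ℝ (Fin 2) × EuclideanSpace ℝ (Fin 2)))
    (_ : IsProbabilityMeasure π) (_ : π.map Prod.fst = ρ) (_ : π.map Prod.snd = ν),
      (∫⁻ p, ENNReal.ofReal (‖p.1 - p.2‖ ^ 2 / 2) ∂π)
        + ENNReal.ofReal ε * KLdiv π (ρ.prod ν)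

/-- `h` is a probability density on `Ω`: a nonnegative function in `L²(μ)` with
`∫ h dμ = 1`. -/
def IsDensity (Ω : Set (EuclideanSpace ℝ (Fin 2)))
    (μ : Measure (EuclideanSpace ℝ (Fin 2))) (h : EuclideanSpace ℝ (Fin 2) → ℝ) : Prop :=
  MemLp h 2 μ ∧ (∀ x ∈ Ω, 0 ≤ h x) ∧ (∫ x, h x ∂μ) = 1

/-- The (entropy regularised, for `ε > 0`) energy
`E_{σ,ε}(h) := OT_ε(hμ, σ) + (g/(2f²)) ∫ h² dμ`;  `E_σ = E_{σ,0}`. -/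
noncomputable def Ese (μ : Measure (EuclideanSpace ℝ (Fin 2))) (f g ε : ℝ)
    (σ : Measure (EuclideanSpace ℝ (Fin 2))) (h : EuclideanSpace ℝ (Fin 2) → ℝ) : ℝ :=
  (OTeps ε (μ.withDensity fun x => ENNReal.ofReal (h x)) σ).toReal
    + g / (2 * f ^ 2) * ∫ x, h x ^ 2 ∂μ

namespace Stmt14Aux

abbrev E2 := EuclideanSpace ℝ (Fin 2)

noncomputable def cost (π : Measure (E2 × E2)) : ENNReal :=
  ∫⁻ p, ENNReal.ofReal (‖p.1 - p.2‖ ^ 2 / 2) ∂π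

lemma KLdiv_self {α : Type*} [MeasurableSpace α] (η : Measure α) [IsProbabilityMeasure η] :
    KLdiv η η = 0 := by
  have h1 : (fun x => Real.log (η.rnDeriv η x).toReal) =ᵐ[η] fun _ => 0 := by
    filter_upwards [Measure.rnDeriv_self η] with x hx
    simp [hx]
  have hint : Integrable (fun x => Real.log (η.rnDeriv η x).toReal) η :=
    (integrable_const (0:ℝ)).congr h1.symm
  rw [KLdiv, if_pos ⟨Measure.AbsolutelyContinuous.rfl, hint⟩, integral_congr_ae h1]
  simp

lemma OTeps_le (ε : ℝ) (ρ ν : Measure E2)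
    (π : Measure (E2 × E2)) (hπ : IsProbabilityMeasure π)
    (h1 : π.map Prod.fst = ρ) (h2 : π.map Prod.snd = ν) :
    OTeps ε ρ ν ≤ cost π + ENNReal.ofReal ε * KLdiv π (ρ.prod ν) := by
  exact le_trans (iInf_le _ π) (le_trans (iInf_le _ hπ)
    (le_trans (iInf_le _ h1) (iInf_le _ h2)))

lemma OTeps_le_cost_prod (ε : ℝ) (ρ ν : Measure E2)
    [IsProbabilityMeasure ρ] [IsProbabilityMeasure ν] :
    OTeps ε ρ ν ≤ cost (ρ.prod ν) := by
  have h1 : (ρ.prod ν).map Prod.fst = ρ := Measure.fst_prod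
  have h2 : (ρ.prod ν).map Prod.snd = ν := Measure.snd_prod
  have := OTeps_le ε ρ ν (ρ.prod ν) inferInstance h1 h2
  simpa [KLdiv_self] using this

lemma cost_prod_lt_top {ρ ν : Measure E2} [IsProbabilityMeasure ρ] [IsProbabilityMeasure ν]
    {S K : Set E2} (hS : IsCompact S) (hK : IsCompact K) (hρ : ρ Sᶜ = 0) (hν : ν Kᶜ = 0) :
    cost (ρ.prod ν) < ⊤ := by
  obtain ⟨R1, hR1⟩ := hS.isBounded.exists_norm_le
  obtain ⟨R2, hR2⟩ := hK.isBounded.exists_norm_le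
  set π := ρ.prod ν
  have hnull : π ((S ×ˢ K)ᶜ) = 0 := by
    rw [Set.compl_prod_eq_union]
    refine le_antisymm (le_trans (measure_union_le _ _) ?_) zero_le
    rw [Measure.prod_prod, Measure.prod_prod, hρ, hν]
    simp
  have hres : π.restrict (S ×ˢ K) = π :=
    Measure.restrict_eq_self_of_ae_mem (mem_ae_iff.mpr hnull)
  have hbound : cost π ≤ ENNReal.ofReal ((R1 + R2)^2/2) * π (S ×ˢ K) := by
    have hkey : ∫⁻ p, ENNReal.ofReal (‖p.1 - p.2‖ ^ 2 / 2) ∂(π.restrict (S ×ˢ K))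
        ≤ ENNReal.ofReal ((R1 + R2)^2/2) * π (S ×ˢ K) := by
      calc ∫⁻ p, ENNReal.ofReal (‖p.1 - p.2‖ ^ 2 / 2) ∂(π.restrict (S ×ˢ K))
          ≤ ∫⁻ _, ENNReal.ofReal ((R1 + R2)^2/2) ∂(π.restrict (S ×ˢ K)) := by
            refine lintegral_mono_ae ?_
            filter_upwards [ae_restrict_mem ((hS.isClosed.measurableSet).prod
              (hK.isClosed.measurableSet))] with p hp
            refine ENNReal.ofReal_le_ofReal ?_
            have h1 : ‖p.1 - p.2‖ ≤ R1 + R2 :=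
              le_trans (norm_sub_le _ _) (add_le_add (hR1 _ hp.1) (hR2 _ hp.2))
            have h0 : (0:ℝ) ≤ ‖p.1 - p.2‖ := norm_nonneg _
            nlinarith
        _ = ENNReal.ofReal ((R1 + R2)^2/2) * π (S ×ˢ K) := by
            rw [lintegral_const, Measure.restrict_apply_univ]
    calc cost π = ∫⁻ p, ENNReal.ofReal (‖p.1 - p.2‖ ^ 2 / 2) ∂(π.restrict (S ×ˢ K)) := by
          rw [cost, hres]
      _ ≤ _ := hkey
  refine lt_of_le_of_lt hbound ?_
  exact ENNReal.mul_lt_top ENNReal.ofReal_lt_top (measure_lt_top _ _)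

lemma OTeps_zero (ρ ν : Measure E2) :
    OTeps 0 ρ ν = ⨅ (π : Measure (E2 × E2)) (_ : IsProbabilityMeasure π)
      (_ : π.map Prod.fst = ρ) (_ : π.map Prod.snd = ν), cost π := by
  simp [OTeps, cost]

lemma OTeps_zero_le (ε : ℝ) (ρ ν : Measure E2) : OTeps 0 ρ ν ≤ OTeps ε ρ ν := by
  rw [OTeps_zero, OTeps]
  refine iInf_mono fun π => iInf_mono fun _ => iInf_mono fun _ => iInf_mono fun _ => ?_
  exact le_add_right (le_refl (cost π))

lemma aux_t {X Y : ℝ} (h : ∀ t : ℝ, 0 < t → t ≤ 1 → 0 ≤ X + t * Y) : 0 ≤ X := by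
  rcases le_or_gt Y 0 with hY | hY
  · have := h 1 one_pos le_rfl; linarith
  · by_contra hX
    push_neg at hX
    set t := min 1 (-X / (2 * Y)) with ht
    have htpos : 0 < t := lt_min one_pos (div_pos (by linarith) (by linarith))
    have ht1 : t ≤ 1 := min_le_left _ _
    have ht2 : t ≤ -X / (2 * Y) := min_le_right _ _
    have := h t htpos ht1
    have htY : t * Y ≤ -X / 2 := by
      have h2 := mul_le_mul_of_nonneg_right ht2 hY.le
      have heq : -X / (2 * Y) * Y = -X / 2 := by
        field_simp
      linarith
    linarith

lemma OT0_convex (ρ0 ρ1 ν : Measure E2) [IsProbabilityMeasure ρ0] [IsProbabilityMeasure ρ1]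
    [IsProbabilityMeasure ν]
    (h0 : OTeps 0 ρ0 ν ≠ ⊤) (h1 : OTeps 0 ρ1 ν ≠ ⊤)
    {a b : ENNReal} (hab : a + b = 1) :
    OTeps 0 (a • ρ0 + b • ρ1) ν ≤ a * OTeps 0 ρ0 ν + b * OTeps 0 ρ1 ν := by
  refine ENNReal.le_of_forall_pos_le_add fun δ hδ _ => ?_
  have hδ0 : (δ : ENNReal) ≠ 0 := by exact_mod_cast hδ.ne'
  have hlt0 : OTeps 0 ρ0 ν < OTeps 0 ρ0 ν + δ := ENNReal.lt_add_right h0 hδ0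
  have hlt1 : OTeps 0 ρ1 ν < OTeps 0 ρ1 ν + δ := ENNReal.lt_add_right h1 hδ0
  rw [OTeps_zero] at hlt0 hlt1
  simp only [iInf_lt_iff] at hlt0 hlt1
  obtain ⟨π0, hP0, hf0, hs0, hc0⟩ := hlt0
  obtain ⟨π1, hP1, hf1, hs1, hc1⟩ := hlt1
  haveI := hP0; haveI := hP1
  set π := a • π0 + b • π1 with hπdef
  have hPπ : IsProbabilityMeasure π := by
    constructor
    simp only [hπdef, Measure.add_apply, Measure.smul_apply, smul_eq_mul,
      measure_univ, mul_one]
    exact hab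
  have hfπ : π.map Prod.fst = a • ρ0 + b • ρ1 := by
    rw [hπdef, Measure.map_add _ _ measurable_fst, Measure.map_smul, Measure.map_smul,
      hf0, hf1]
  have hsπ : π.map Prod.snd = ν := by
    rw [hπdef, Measure.map_add _ _ measurable_snd, Measure.map_smul, Measure.map_smul,
      hs0, hs1]
    rw [← add_smul, hab, one_smul]
  have hcπ : cost π = a * cost π0 + b * cost π1 := by
    rw [hπdef, cost, lintegral_add_measure, lintegral_smul_measure, lintegral_smul_measure]
    rfl
  have hmain : OTeps 0 (a • ρ0 + b • ρ1) ν ≤ cost π := by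
    rw [OTeps_zero]
    exact le_trans (iInf_le _ π) (le_trans (iInf_le _ hPπ)
      (le_trans (iInf_le _ hfπ) (iInf_le _ hsπ)))
  calc OTeps 0 (a • ρ0 + b • ρ1) ν ≤ a * cost π0 + b * cost π1 := hmain.trans_eq hcπ
    _ ≤ a * (OTeps 0 ρ0 ν + δ) + b * (OTeps 0 ρ1 ν + δ) := by
        rw [OTeps_zero, OTeps_zero]
        exact add_le_add (mul_le_mul_right hc0.le a) (mul_le_mul_right hc1.le b)
    _ = a * OTeps 0 ρ0 ν + b * OTeps 0 ρ1 ν + (a + b) * δ := by ring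
    _ = a * OTeps 0 ρ0 ν + b * OTeps 0 ρ1 ν + δ := by rw [hab, one_mul]
lemma integrable_mul_of_memL2 {α : Type*} [MeasurableSpace α] {μ : Measure α} {φ f : α → ℝ}
    (hφ : MemLp φ 2 μ) (hf : MemLp f 2 μ) : Integrable (fun x => φ x * f x) μ := by
  have hpqr : (1 : ENNReal)/1 = 1/2 + 1/2 := by
    have h22 : ((1:ENNReal) + 1) / 2 = 1 := by
      rw [one_add_one_eq_two, ENNReal.div_self] <;> norm_num
    rw [ENNReal.div_add_div_same, h22, one_div_one]
  have h := hf.smul (r := 1) hφ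
  rw [memLp_one_iff_integrable] at h
  exact h

end Stmt14Aux

open Stmt14Aux

/-- Let `h*` be the unique minimizer of `E_σ = E_{σ,0}` over
probability densities on `Ω`, and for `ε > 0` let `h_ε` minimize `E_{σ,ε}`.  Then
`‖h_ε − h*‖²_{L²(μ)} ≤ (2f²/g)·(OT_ε(h*μ,σ) − OT(h*μ,σ))`.  In particular, if
`OT_ε(h*μ,σ) − OT(h*μ,σ) ≤ C·ε·log(1/ε)`, then
`‖h_ε − h*‖_{L²(μ)} ≤ √((2f²/g)·C·ε·log(1/ε))`. -/
theorem stmt_14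
    (Ω : Set (EuclideanSpace ℝ (Fin 2)))
    (hΩcpt : IsCompact Ω) (hΩconv : Convex ℝ Ω) (hΩint : (interior Ω).Nonempty)
    (μ : Measure (EuclideanSpace ℝ (Fin 2)))
    (hμ : μ = (volume Ω)⁻¹ • volume.restrict Ω)
    (f g : ℝ) (hf : 0 < f) (hg : 0 < g)
    (σ : Measure (EuclideanSpace ℝ (Fin 2))) [IsProbabilityMeasure σ]
    (hσ : ∃ K, IsCompact K ∧ σ Kᶜ = 0)
    (hstar : EuclideanSpace ℝ (Fin 2) → ℝ) (hstarD : IsDensity Ω μ hstar)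
    (hstarMin : ∀ h, IsDensity Ω μ h → Ese μ f g 0 σ hstar ≤ Ese μ f g 0 σ h)
    (ε : ℝ) (hε : 0 < ε)
    (heps : EuclideanSpace ℝ (Fin 2) → ℝ) (hepsD : IsDensity Ω μ heps)
    (hepsMin : ∀ h, IsDensity Ω μ h → Ese μ f g ε σ heps ≤ Ese μ f g ε σ h) :
    (∫ x, (heps x - hstar x) ^ 2 ∂μ) ≤
      2 * f ^ 2 / g *
        ((OTeps ε (μ.withDensity fun x => ENNReal.ofReal (hstar x)) σ).toReal
          - (OTeps 0 (μ.withDensity fun x => ENNReal.ofReal (hstar x)) σ).toReal) ∧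
    ∀ C : ℝ,
      (OTeps ε (μ.withDensity fun x => ENNReal.ofReal (hstar x)) σ).toReal
          - (OTeps 0 (μ.withDensity fun x => ENNReal.ofReal (hstar x)) σ).toReal ≤
        C * ε * Real.log (1 / ε) →
      Real.sqrt (∫ x, (heps x - hstar x) ^ 2 ∂μ) ≤
        Real.sqrt (2 * f ^ 2 / g * (C * ε * Real.log (1 / ε))) := by
  obtain ⟨K, hKcpt, hKnull⟩ := hσ
  have hΩmeas : MeasurableSet Ω := hΩcpt.isClosed.measurableSet
  have hΩvol_lt : volume Ω < ⊤ := hΩcpt.measure_lt_top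
  have hΩvol_pos : 0 < volume Ω :=
    lt_of_lt_of_le (isOpen_interior.measure_pos volume hΩint) (measure_mono interior_subset)
  have hμΩc : μ Ωᶜ = 0 := by
    rw [hμ]
    simp [Measure.smul_apply, Measure.restrict_apply hΩmeas.compl]
  haveI hμprob : IsProbabilityMeasure μ := by
    constructor
    rw [hμ]
    simp only [Measure.smul_apply, Measure.restrict_apply_univ, smul_eq_mul]
    exact ENNReal.inv_mul_cancel hΩvol_pos.ne' hΩvol_lt.ne
  have haeΩ : ∀ᵐ x ∂μ, x ∈ Ω := mem_ae_iff.mpr hμΩc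
  -- probability and support facts for densities
  have hρprob : ∀ h : EuclideanSpace ℝ (Fin 2) → ℝ, IsDensity Ω μ h →
      IsProbabilityMeasure (μ.withDensity fun x => ENNReal.ofReal (h x)) := by
    intro h hD
    constructor
    rw [withDensity_apply _ MeasurableSet.univ, Measure.restrict_univ,
      ← ofReal_integral_eq_lintegral_ofReal (hD.1.integrable one_le_two)
        (by filter_upwards [haeΩ] with x hx using hD.2.1 x hx), hD.2.2]
    simp
  have hρnull : ∀ h : EuclideanSpace ℝ (Fin 2) → ℝ, IsDensity Ω μ h →
      (μ.withDensity fun x => ENNReal.ofReal (h x)) Ωᶜ = 0 := by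
    intro h hD
    rw [withDensity_apply _ hΩmeas.compl, Measure.restrict_eq_zero.mpr hμΩc]
    simp
  have hfin : ∀ (ε' : ℝ) (h : EuclideanSpace ℝ (Fin 2) → ℝ), IsDensity Ω μ h →
      OTeps ε' (μ.withDensity fun x => ENNReal.ofReal (h x)) σ ≠ ⊤ := by
    intro ε' h hD
    haveI := hρprob h hD
    exact ne_top_of_le_ne_top
      (cost_prod_lt_top hΩcpt hKcpt (hρnull h hD) hKnull).ne
      (OTeps_le_cost_prod ε' _ σ)
  haveI hρsP : IsProbabilityMeasure (μ.withDensity fun x => ENNReal.ofReal (hstar x)) :=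
    hρprob hstar hstarD
  haveI hρeP : IsProbabilityMeasure (μ.withDensity fun x => ENNReal.ofReal (heps x)) :=
    hρprob heps hepsD
  -- real abbreviations
  set As : ℝ := (OTeps 0 (μ.withDensity fun x => ENNReal.ofReal (hstar x)) σ).toReal with hAs
  set Ae : ℝ := (OTeps 0 (μ.withDensity fun x => ENNReal.ofReal (heps x)) σ).toReal with hAe
  set Bs : ℝ := (OTeps ε (μ.withDensity fun x => ENNReal.ofReal (hstar x)) σ).toReal with hBs
  set Be : ℝ := (OTeps ε (μ.withDensity fun x => ENNReal.ofReal (heps x)) σ).toReal with hBe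
  set c : ℝ := g / (2 * f ^ 2) with hcdef
  have hc : 0 < c := by positivity
  set Qs : ℝ := ∫ x, hstar x ^ 2 ∂μ with hQs
  set D : ℝ := ∫ x, (heps x - hstar x) ^ 2 ∂μ with hD
  set I : ℝ := ∫ x, hstar x * (heps x - hstar x) ∂μ with hI
  -- integrability
  have hint_s : Integrable hstar μ := hstarD.1.integrable one_le_two
  have hint_e : Integrable heps μ := hepsD.1.integrable one_le_two
  have hd2 : MemLp (fun x => heps x - hstar x) 2 μ := hepsD.1.sub hstarD.1
  have hint_ss : Integrable (fun x => hstar x ^ 2) μ := by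
    simpa only [pow_two] using integrable_mul_of_memL2 hstarD.1 hstarD.1
  have hint_sd : Integrable (fun x => hstar x * (heps x - hstar x)) μ :=
    integrable_mul_of_memL2 hstarD.1 hd2
  have hint_dd : Integrable (fun x => (heps x - hstar x) ^ 2) μ := by
    simpa only [pow_two] using integrable_mul_of_memL2 hd2 hd2
  -- quadratic expansion
  have hQ : ∀ t : ℝ, (∫ x, ((1-t) * hstar x + t * heps x) ^ 2 ∂μ)
      = Qs + 2*t*I + t^2*D := by
    intro t
    have hptw : (fun x => ((1-t) * hstar x + t * heps x) ^ 2)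
        = fun x => hstar x ^ 2 + (2*t) * (hstar x * (heps x - hstar x))
            + t^2 * ((heps x - hstar x) ^ 2) := by
      funext x; ring
    rw [hptw]
    have e1 : ∫ x, (hstar x ^ 2 + 2*t*(hstar x * (heps x - hstar x))
          + t^2*((heps x - hstar x) ^ 2)) ∂μ
        = (∫ x, (hstar x ^ 2 + 2*t*(hstar x * (heps x - hstar x))) ∂μ)
          + ∫ x, t^2*((heps x - hstar x) ^ 2) ∂μ :=
      integral_add (hint_ss.add (hint_sd.const_mul _)) (hint_dd.const_mul _)
    have e2 : ∫ x, (hstar x ^ 2 + 2*t*(hstar x * (heps x - hstar x))) ∂μ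
        = Qs + ∫ x, 2*t*(hstar x * (heps x - hstar x)) ∂μ :=
      integral_add hint_ss (hint_sd.const_mul _)
    rw [e1, e2, integral_const_mul, integral_const_mul]
  -- h_t is a density
  have hDt : ∀ t : ℝ, 0 ≤ t → t ≤ 1 →
      IsDensity Ω μ (fun x => (1-t) * hstar x + t * heps x) := by
    intro t ht0 ht1
    refine ⟨(hstarD.1.const_mul (1-t)).add (hepsD.1.const_mul t), ?_, ?_⟩
    · intro x hx
      have h1 := hstarD.2.1 x hx
      have h2 := hepsD.2.1 x hx
      have : (0:ℝ) ≤ 1 - t := by linarith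
      positivity
    · rw [integral_add (hint_s.const_mul _) (hint_e.const_mul _), integral_const_mul,
        integral_const_mul, hstarD.2.2, hepsD.2.2]
      ring
  -- the mixed measure identity
  have hmix : ∀ t : ℝ, 0 ≤ t → t ≤ 1 →
      (μ.withDensity fun x => ENNReal.ofReal ((1-t) * hstar x + t * heps x)) =
        ENNReal.ofReal (1-t) • (μ.withDensity fun x => ENNReal.ofReal (hstar x))
          + ENNReal.ofReal t • (μ.withDensity fun x => ENNReal.ofReal (heps x)) := by
    intro t ht0 ht1
    have hm0 : AEMeasurable (fun x => ENNReal.ofReal (hstar x)) μ :=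
      ENNReal.measurable_ofReal.comp_aemeasurable hstarD.1.aestronglyMeasurable.aemeasurable
    have hm1 : AEMeasurable (fun x => ENNReal.ofReal (heps x)) μ :=
      ENNReal.measurable_ofReal.comp_aemeasurable hepsD.1.aestronglyMeasurable.aemeasurable
    set G0 := hm0.mk _ with hG0def
    set G1 := hm1.mk _ with hG1def
    have hG0 : Measurable G0 := hm0.measurable_mk
    have hG1 : Measurable G1 := hm1.measurable_mk
    have he0 : (fun x => ENNReal.ofReal (hstar x)) =ᵐ[μ] G0 := hm0.ae_eq_mk
    have he1 : (fun x => ENNReal.ofReal (heps x)) =ᵐ[μ] G1 := hm1.ae_eq_mk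
    have step1 : (μ.withDensity fun x => ENNReal.ofReal ((1-t) * hstar x + t * heps x)) =
        μ.withDensity ((fun x => ENNReal.ofReal (1-t) * G0 x)
          + fun x => ENNReal.ofReal t * G1 x) := by
      apply withDensity_congr_ae
      filter_upwards [haeΩ, he0, he1] with x hx h0 h1
      have hsx := hstarD.2.1 x hx
      have hex := hepsD.2.1 x hx
      have h1t : (0:ℝ) ≤ 1 - t := by linarith
      show ENNReal.ofReal ((1-t) * hstar x + t * heps x)
        = ENNReal.ofReal (1-t) * G0 x + ENNReal.ofReal t * G1 x
      rw [ENNReal.ofReal_add (mul_nonneg h1t hsx) (mul_nonneg ht0 hex),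
        ENNReal.ofReal_mul h1t, ENNReal.ofReal_mul ht0, h0, h1]
    rw [step1, withDensity_add_left (hG0.const_mul _)]
    have s2 : μ.withDensity (fun x => ENNReal.ofReal (1-t) * G0 x)
        = ENNReal.ofReal (1-t) • μ.withDensity G0 :=
      withDensity_smul' _ _ ENNReal.ofReal_ne_top
    have s3 : μ.withDensity (fun x => ENNReal.ofReal t * G1 x)
        = ENNReal.ofReal t • μ.withDensity G1 :=
      withDensity_smul' _ _ ENNReal.ofReal_ne_top
    rw [s2, s3, withDensity_congr_ae he0.symm, withDensity_congr_ae he1.symm]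
  -- convexity of OT at the real level
  have hAt : ∀ t : ℝ, 0 ≤ t → t ≤ 1 →
      (OTeps 0 (μ.withDensity fun x => ENNReal.ofReal ((1-t) * hstar x + t * heps x)) σ).toReal
        ≤ (1-t) * As + t * Ae := by
    intro t ht0 ht1
    have h1t : (0:ℝ) ≤ 1 - t := by linarith
    have hab : ENNReal.ofReal (1-t) + ENNReal.ofReal t = 1 := by
      rw [← ENNReal.ofReal_add h1t ht0]
      norm_num
    have hconv := OT0_convex
      (μ.withDensity fun x => ENNReal.ofReal (hstar x))
      (μ.withDensity fun x => ENNReal.ofReal (heps x)) σ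
      (hfin 0 hstar hstarD) (hfin 0 heps hepsD) hab
    rw [← hmix t ht0 ht1] at hconv
    have hrhs_ne : ENNReal.ofReal (1-t) * OTeps 0 (μ.withDensity fun x => ENNReal.ofReal (hstar x)) σ
        + ENNReal.ofReal t * OTeps 0 (μ.withDensity fun x => ENNReal.ofReal (heps x)) σ ≠ ⊤ :=
      ENNReal.add_ne_top.mpr
        ⟨ENNReal.mul_ne_top ENNReal.ofReal_ne_top (hfin 0 hstar hstarD),
         ENNReal.mul_ne_top ENNReal.ofReal_ne_top (hfin 0 heps hepsD)⟩
    have := ENNReal.toReal_mono hrhs_ne hconv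
    rwa [ENNReal.toReal_add (ENNReal.mul_ne_top ENNReal.ofReal_ne_top (hfin 0 hstar hstarD))
      (ENNReal.mul_ne_top ENNReal.ofReal_ne_top (hfin 0 heps hepsD)),
      ENNReal.toReal_mul, ENNReal.toReal_mul, ENNReal.toReal_ofReal h1t,
      ENNReal.toReal_ofReal ht0] at this
  -- optimality of hstar along the segment
  have hX : 0 ≤ (Ae - As) + 2*c*I := by
    apply aux_t (Y := c*D)
    intro t ht0 ht1
    have hmin := hstarMin _ (hDt t ht0.le ht1)
    rw [Ese, Ese] at hmin
    rw [hQ t] at hmin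
    have hconv := hAt t ht0.le ht1
    have key : 0 ≤ t * ((Ae - As) + 2*c*I + t * (c*D)) := by nlinarith
    nlinarith
  -- optimality of heps at ε
  have hminε : Be + c * (∫ x, heps x ^ 2 ∂μ) ≤ Bs + c * Qs := hepsMin hstar hstarD
  have hQe : (∫ x, heps x ^ 2 ∂μ) = Qs + 2*I + D := by
    have h1 := hQ 1
    simp only [sub_self, zero_mul, one_mul, zero_add, one_pow] at h1
    linarith [h1]
  have hAeBe : Ae ≤ Be :=
    ENNReal.toReal_mono (hfin ε heps hepsD) (OTeps_zero_le ε _ σ)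
  -- conclusion
  have hfinal : c * D ≤ Bs - As := by
    rw [hQe] at hminε
    linarith
  have hpart1 : D ≤ 2 * f ^ 2 / g * (Bs - As) := by
    have hcc : c * (2 * f ^ 2 / g) = 1 := by
      rw [hcdef]; field_simp
    have h2 : (0:ℝ) ≤ 2 * f ^ 2 / g := by positivity
    have h3 := mul_le_mul_of_nonneg_left hfinal h2
    calc D = (c * (2 * f ^ 2 / g)) * D := by rw [hcc, one_mul]
      _ = 2 * f ^ 2 / g * (c * D) := by ring
      _ ≤ 2 * f ^ 2 / g * (Bs - As) := h3
  refine ⟨hpart1, fun C hC => ?_⟩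
  apply Real.sqrt_le_sqrt
  exact hpart1.trans (mul_le_mul_of_nonneg_left hC (by positivity))
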